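/- Roth's theorem in the density form: if f(n) denotes the maximal size of a 3-AP-free subset of {1,...,n}, then lim_{n→∞} f(n)/n = 0. -/

import Mathlib

/-- Roth's theorem, density form: the maximal size of a 3-AP-free subset of `{1,…,n}`
is `o(n)`. -/
theorem roth_density_form
    (f : ℕ → ℕ)
    (hf : ∀ n : ℕ, IsGreatest
      {k : ℕ | ∃ A : Finset ℕ, ↑A ⊆ Set.Icc 1 n ∧
        (¬ ∃ a d : ℕ, d ≠ 0 ∧ a ∈ A ∧ a + d ∈ A ∧ a + 2 * d ∈ A) ∧ A.card = k} (f n)) :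
    Filter.Tendsto (fun n : ℕ => (f n : ℝ) / n) Filter.atTop (nhds 0) := by
  have key : ∀ n, f n ≤ rothNumberNat n := by
    intro n
    obtain ⟨A, hA, hAP, hcard⟩ := (hf n).1
    -- A is three-AP-free
    have hfree : ThreeAPFree (A : Set ℕ) := by
      intro a ha b hb c hc habc
      by_contra hab
      rcases lt_or_gt_of_ne hab with h | h
      · exact hAP ⟨a, b - a, by omega, ha, by
          constructor
          · rw [show a + (b - a) = b by omega]; exact hb
          · rw [show a + 2 * (b - a) = c by omega]; exact hc⟩
      · have hcb : c < b := by omega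
        exact hAP ⟨c, b - c, by omega, hc, by
          constructor
          · rw [show c + (b - c) = b by omega]; exact hb
          · rw [show c + 2 * (b - c) = a by omega]; exact ha⟩
    -- shift A down by 1
    set B := A.image (· - 1) with hB
    have hinj : Set.InjOn (· - 1) (A : Set ℕ) := by
      intro x hx y hy hxy
      have hx1 := (hA hx).1
      have hy1 := (hA hy).1
      dsimp only at hxy
      omega
    have hcardB : B.card = f n := by
      rw [hB, Finset.card_image_of_injOn hinj, hcard]
    have hBfree : ThreeAPFree (B : Set ℕ) := by
      intro a ha b hb c hc habc
      simp only [hB, Finset.coe_image, Set.mem_image, Finset.mem_coe] at ha hb hc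
      obtain ⟨x, hx, rfl⟩ := ha
      obtain ⟨y, hy, rfl⟩ := hb
      obtain ⟨z, hz, rfl⟩ := hc
      have hx1 := (hA hx).1
      have hy1 := (hA hy).1
      have hz1 := (hA hz).1
      have : x + z = y + y := by omega
      have := hfree hx hy hz this
      omega
    refine hBfree.le_rothNumberNat B ?_ hcardB
    intro x hx
    simp only [hB, Finset.mem_image] at hx
    obtain ⟨y, hy, rfl⟩ := hx
    have := hA hy
    simp only [Set.mem_Icc] at this
    omega
  have h0 : Filter.Tendsto (fun n : ℕ => (rothNumberNat n : ℝ) / n) Filter.atTop (nhds 0) :=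
    rothNumberNat_isLittleO_id.tendsto_div_nhds_zero
  refine squeeze_zero (fun n => by positivity) (fun n => ?_) h0
  gcongr
  exact_mod_cast key n
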